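/- The graph J whose vertices are the bags C = C⁻ ∪ C⁺ (where C⁻ is a public node and C⁺ the set of all children of nodes in C⁻), with an edge between C₁ and C₂ whenever one contains a parent of a node of the other, is a tree. -/

import Mathlib

/-- Ancestor relation generated by a parent map. -/
def anc {H : Type*} (par : H → Option H) : H → H → Prop :=
  Relation.ReflTransGen (fun g h => par h = some g)

/-- `h ⪯ I` : `h` has a descendant in `I`. -/
def precedesSet {H : Type*} (par : H → Option H) (h : H) (I : Set H) : Prop :=
  ∃ g ∈ I, anc par h g

/-- The relation `∼` on nodes of the game tree. -/
def simRel {H : Type*} (par : H → Option H) (depth : H → ℕ)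
    (infosets : Set (Set H)) (h₁ h₂ : H) : Prop :=
  depth h₁ = depth h₂ ∧ ∃ I ∈ infosets, precedesSet par h₁ I ∧ precedesSet par h₂ I

/-- The setoid of public nodes: equivalence classes of the closure of `∼`. -/
def pubSetoid {H : Type*} (par : H → Option H) (depth : H → ℕ)
    (infosets : Set (Set H)) : Setoid H :=
  ⟨Relation.EqvGen (simRel par depth infosets),
   Relation.EqvGen.is_equivalence _⟩

/-- The graph on public nodes (equivalence classes): `C₁` and `C₂` are adjacent iff one
contains a parent of a node of the other (equivalently, on the level of bags
`C = C⁻ ∪ C⁺`, one bag contains a parent of a node of the other). -/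
def publicGraph {H : Type*} (par : H → Option H) (depth : H → ℕ)
    (infosets : Set (Set H)) :
    SimpleGraph (Quotient (pubSetoid par depth infosets)) :=
  SimpleGraph.fromRel (fun q₁ q₂ => ∃ h g : H, par h = some g ∧
    Quotient.mk (pubSetoid par depth infosets) g = q₁ ∧
    Quotient.mk (pubSetoid par depth infosets) h = q₂)

section Aux

variable {H : Type*} (par : H → Option H) (depth : H → ℕ) (infosets : Set (Set H))

lemma depth_eq_of_eqvGen {h h' : H}
    (hhh : Relation.EqvGen (simRel par depth infosets) h h') : depth h = depth h' := by
  induction hhh with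
  | rel _ _ hr => exact hr.1
  | refl => rfl
  | symm _ _ _ ih => omega
  | trans _ _ _ _ _ ih₁ ih₂ => omega

lemma simRel_par {h₁ h₂ g₁ g₂ : H}
    (hdepth : ∀ h g : H, par h = some g → depth h = depth g + 1)
    (hs : simRel par depth infosets h₁ h₂)
    (hg₁ : par h₁ = some g₁) (hg₂ : par h₂ = some g₂) :
    simRel par depth infosets g₁ g₂ := by
  obtain ⟨hd, I, hI, ⟨x₁, hx₁, ha₁⟩, ⟨x₂, hx₂, ha₂⟩⟩ := hs
  refine ⟨?_, I, hI, ⟨x₁, hx₁, ?_⟩, ⟨x₂, hx₂, ?_⟩⟩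
  · have := hdepth h₁ g₁ hg₁; have := hdepth h₂ g₂ hg₂; omega
  · exact Relation.ReflTransGen.trans (Relation.ReflTransGen.single hg₁) ha₁
  · exact Relation.ReflTransGen.trans (Relation.ReflTransGen.single hg₂) ha₂

lemma eqvGen_par {root : H}
    (hdroot : depth root = 0)
    (hdepth : ∀ h g : H, par h = some g → depth h = depth g + 1)
    (hpar : ∀ h : H, h ≠ root → (par h).isSome)
    {h h' : H} (hhh : Relation.EqvGen (simRel par depth infosets) h h') :
    ∀ g g', par h = some g → par h' = some g' →
      Relation.EqvGen (simRel par depth infosets) g g' := by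
  induction hhh with
  | rel a b hr =>
      intro g g' hg hg'
      exact Relation.EqvGen.rel _ _ (simRel_par par depth infosets hdepth hr hg hg')
  | refl a =>
      intro g g' hg hg'
      rw [hg] at hg'
      cases hg'
      exact Relation.EqvGen.refl _
  | symm a b _ ih =>
      intro g g' hg hg'
      exact Relation.EqvGen.symm _ _ (ih g' g hg' hg)
  | trans a b c hab _ ih₁ ih₂ =>
      intro g g' hg hg'
      have hdb : depth b = depth a := (depth_eq_of_eqvGen par depth infosets hab).symm
      have hda : depth a = depth g + 1 := hdepth a g hg
      have hbne : b ≠ root := by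
        intro hb; rw [hb, hdroot] at hdb; omega
      obtain ⟨gb, hgb⟩ := Option.isSome_iff_exists.mp (hpar b hbne)
      exact Relation.EqvGen.trans _ _ _ (ih₁ g gb hg hgb) (ih₂ gb g' hgb hg')

end Aux

/-- The graph whose vertices are the bags `C = C⁻ ∪ C⁺` (for public
nodes `C⁻`), with an edge between two bags whenever one contains a parent of a node of
the other, is a tree. -/
theorem stmt6 {H : Type*} [Fintype H] (par : H → Option H) (depth : H → ℕ)
    (infosets : Set (Set H)) (root : H)
    (hthin : ∀ I ∈ infosets, ∀ h ∈ I, ∀ h' ∈ I, depth h = depth h')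
    (hroot : par root = none) (hdroot : depth root = 0)
    (hdepth : ∀ h g : H, par h = some g → depth h = depth g + 1)
    (hpar : ∀ h : H, h ≠ root → (par h).isSome) :
    (publicGraph par depth infosets).IsTree := by
  classical
  set S := pubSetoid par depth infosets with hS
  set G := publicGraph par depth infosets with hG
  set mk : H → Quotient S := Quotient.mk S with hmk
  set rel : Quotient S → Quotient S → Prop :=
    (fun q₁ q₂ => ∃ h g : H, par h = some g ∧ mk g = q₁ ∧ mk h = q₂) with hrel
  -- depth descends to the quotient
  set Dq : Quotient S → ℕ :=
    Quotient.lift depth (fun _ _ hab => depth_eq_of_eqvGen par depth infosets hab) with hDq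
  have hDmk : ∀ h : H, Dq (mk h) = depth h := fun h => rfl
  -- every non-root node has a parent, and root is the only node of depth 0
  have hdzero : ∀ h : H, depth h = 0 → h = root := by
    intro h hh
    by_contra hne
    obtain ⟨g, hg⟩ := Option.isSome_iff_exists.mp (hpar h hne)
    have := hdepth h g hg; omega
  -- depth relation along rel
  have hrelD : ∀ q₁ q₂, rel q₁ q₂ → Dq q₂ = Dq q₁ + 1 := by
    rintro q₁ q₂ ⟨h, g, hg, hq₁, hq₂⟩
    rw [← hq₁, ← hq₂, hDmk, hDmk]
    exact hdepth h g hg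
  -- uniqueness of the parent class
  have hrelU : ∀ q₁ q₂ q, rel q₁ q → rel q₂ q → q₁ = q₂ := by
    rintro q₁ q₂ q ⟨h, g, hg, hq₁, hq⟩ ⟨h', g', hg', hq₂, hq'⟩
    rw [← hq₁, ← hq₂]
    apply Quotient.sound
    have hhh : Relation.EqvGen (simRel par depth infosets) h h' :=
      Quotient.exact (s := S) (hq.trans hq'.symm)
    exact eqvGen_par par depth infosets hdroot hdepth hpar hhh g g' hg hg'
  have hadj : ∀ q₁ q₂, G.Adj q₁ q₂ ↔ q₁ ≠ q₂ ∧ (rel q₁ q₂ ∨ rel q₂ q₁) := by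
    intro q₁ q₂
    exact SimpleGraph.fromRel_adj _ q₁ q₂
  -- from an adjacency with non-increasing depth, we get the parent relation
  have hadj_par : ∀ q₁ q₂, G.Adj q₁ q₂ → Dq q₂ ≤ Dq q₁ → rel q₂ q₁ := by
    intro q₁ q₂ hA hle
    rcases (hadj q₁ q₂).mp hA with ⟨_, h | h⟩
    · have := hrelD _ _ h; omega
    · exact h
  -- connectivity
  have hreach0 : ∀ n : ℕ, ∀ h : H, depth h = n → G.Reachable (mk h) (mk root) := by
    intro n
    induction n using Nat.strong_induction_on with
    | _ n ih =>
      intro h hn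
      rcases Nat.eq_zero_or_pos n with h0 | h0
      · rw [hdzero h (h0 ▸ hn)]
      · have hne : h ≠ root := by intro hh; rw [hh, hdroot] at hn; omega
        obtain ⟨g, hg⟩ := Option.isSome_iff_exists.mp (hpar h hne)
        have hdg := hdepth h g hg
        have hrgh : rel (mk g) (mk h) := ⟨h, g, hg, rfl, rfl⟩
        have hne' : mk h ≠ mk g := by
          intro he
          have : Dq (mk h) = Dq (mk g) := by rw [he]
          have := hrelD _ _ hrgh; omega
        have hA : G.Adj (mk h) (mk g) := (hadj _ _).mpr ⟨hne', Or.inr hrgh⟩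
        exact hA.reachable.trans (ih (depth g) (by omega) g rfl)
  have hreach : ∀ q : Quotient S, G.Reachable q (mk root) := by
    intro q
    obtain ⟨h, rfl⟩ := Quotient.exists_rep q
    exact hreach0 (depth h) h rfl
  constructor
  · haveI : Nonempty (Quotient (pubSetoid par depth infosets)) := ⟨mk root⟩
    exact ⟨fun u v => (hreach u).trans (hreach v).symm⟩
  · -- acyclicity
    intro q c hc
    -- pick a vertex of maximal depth on the cycle
    have hsupne : c.support.toFinset.Nonempty := by
      simp [List.toFinset_nonempty_iff, SimpleGraph.Walk.support_ne_nil]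
    obtain ⟨x, hxmem, hxmax⟩ := Finset.exists_max_image c.support.toFinset Dq hsupne
    rw [List.mem_toFinset] at hxmem
    set c' : G.Walk x x := c.rotate x hxmem with hc'def
    have hc' : c'.IsCycle := hc.rotate hxmem
    -- every vertex of c' is in c's support
    have hmem' : ∀ y, y ∈ c'.support → Dq y ≤ Dq x := by
      intro y hy
      have htl : c'.support.tail ~r c.support.tail := SimpleGraph.Walk.support_rotate c x hxmem
      rw [SimpleGraph.Walk.support_eq_cons c'] at hy
      rcases List.mem_cons.mp hy with hy' | hy'
      · exact le_of_eq (by rw [hy'])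
      · have hy2 : y ∈ c.support.tail := htl.mem_iff.mp hy'
        have hy3 : y ∈ c.support := List.mem_of_mem_tail hy2
        exact hxmax y (List.mem_toFinset.mpr hy3)
    -- decompose the cycle
    cases hcc : c' with
    | nil => exact hc'.ne_nil hcc
    | @cons _ y _ hadjxy p =>
      have hyle : Dq y ≤ Dq x := by
        apply hmem'
        rw [hcc]; simp
      have hrely : rel y x := hadj_par _ _ hadjxy hyle
      -- decompose from the other end
      obtain ⟨z, q', hadjzx, hqz⟩ := SimpleGraph.Walk.exists_cons_eq_concat hadjxy p
      have hzle : Dq z ≤ Dq x := by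
        apply hmem'
        rw [hcc, hqz]
        simp [SimpleGraph.Walk.concat_eq_append]
      have hrelz : rel z x := hadj_par _ _ hadjzx.symm hzle
      have hzy : z = y := hrelU z y x hrelz hrely
      -- now derive a contradiction with edge-nodup
      have hlen : 3 ≤ c'.length := hc'.three_le_length
      have hnodup := hc'.edges_nodup
      have hedges1 : c'.edges = s(x, y) :: p.edges := by rw [hcc]; rfl
      have hedges2 : c'.edges = q'.edges ++ [s(z, x)] := by
        rw [hcc, hqz, SimpleGraph.Walk.concat_eq_append,
          SimpleGraph.Walk.edges_append]
        rfl
      have hpne : p.edges ≠ [] := by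
        have h1 : c'.length = p.length + 1 := by rw [hcc]; simp
        have h2 : p.edges.length = p.length := SimpleGraph.Walk.length_edges p
        intro hnil
        rw [hnil] at h2
        simp only [List.length_nil] at h2
        omega
      have hlast1 : c'.edges.getLast? = some s(z, x) := by
        rw [hedges2]; exact List.getLast?_concat
      have hlast2 : c'.edges.getLast? = p.edges.getLast? := by
        rw [hedges1, List.getLast?_cons,
          List.getLast?_eq_getLast_of_ne_nil hpne, Option.getD_some]
      have hsome : p.edges.getLast? = some s(z, x) := by rw [← hlast2, hlast1]
      have hmem : s(z, x) ∈ p.edges := by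
        obtain ⟨hne0, heq⟩ := List.mem_getLast?_eq_getLast (Option.mem_def.mpr hsome)
        rw [heq]
        exact List.getLast_mem hne0
      rw [hzy] at hmem
      have hxy : s(x, y) ∈ p.edges := by rwa [Sym2.eq_swap] at hmem
      rw [hedges1] at hnodup
      exact (List.nodup_cons.mp hnodup).1 hxy
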